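/- For every recursive space-filling curve map π on the grid D = {0,…,2^ω−1}² in the sense of Definition 2.3, the bijection σ : {0,…,4^ω−1} → D obtained by listing the points of D in increasing lexicographic order of their strings π(p) is a recursive space-filling curve ordering in the sense of Definition 2.1. -/

import Mathlib

/-- The axis-aligned square of grid points with corner `c` and side length `s`. -/
def square (c : ℕ × ℕ) (s : ℕ) : Set (ℕ × ℕ) :=
  {p | c.1 ≤ p.1 ∧ p.1 < c.1 + s ∧ c.2 ≤ p.2 ∧ p.2 < c.2 + s}

/-- The grid `D = {0,…,2^ω−1}²`. -/
def grid (ω : ℕ) : Set (ℕ × ℕ) := square (0, 0) (2 ^ ω)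

/-- A recursive space-filling curve ordering (Definition 2.1) of the grid
`D = {0,…,2^ω−1}²` with `m = 4^ω` points: a bijection `σ : {0,…,m−1} → D` such
that, if `ω ≥ 1`, there exist four pairwise disjoint equal-sized axis-aligned
subsquares `S₁, S₂, S₃, S₄` partitioning `D` with
`σ({j·m/4,…,(j+1)·m/4−1}) = S_{j+1} ∩ D` for `j = 0,1,2,3`, and the restriction of
`σ` to each `S_j`, reindexed and translated back to the origin, is itself a
recursive space-filling curve ordering. -/
def IsRSFCOrdering : ℕ → (ℕ → ℕ × ℕ) → Prop
  | 0, σ => Set.BijOn σ (Set.Iio (4 ^ 0)) (grid 0)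
  | ω + 1, σ =>
      Set.BijOn σ (Set.Iio (4 ^ (ω + 1))) (grid (ω + 1)) ∧
      ∃ (c : Fin 4 → ℕ × ℕ) (s : ℕ),
        (∀ j j' : Fin 4, j ≠ j' → Disjoint (square (c j) s) (square (c j') s)) ∧
        (⋃ j, square (c j) s) = grid (ω + 1) ∧
        (∀ j : Fin 4,
          σ '' Set.Ico (j.1 * 4 ^ ω) ((j.1 + 1) * 4 ^ ω) =
            square (c j) s ∩ grid (ω + 1)) ∧
        (∀ j : Fin 4, IsRSFCOrdering ω fun i =>
          ((σ (j.1 * 4 ^ ω + i)).1 - (c j).1, (σ (j.1 * 4 ^ ω + i)).2 - (c j).2))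

/-- `(a, b)` is the corner of a level-`k` dyadic cell of the grid `{0,…,2^ω−1}²`,
i.e. `a, b < 2^ω` are divisible by `2^k`. -/
def CellCorner (ω k a b : ℕ) : Prop :=
  a < 2 ^ ω ∧ b < 2 ^ ω ∧ 2 ^ k ∣ a ∧ 2 ^ k ∣ b

/-- The level-`k` dyadic cell `{a,…,a+2^k−1} × {b,…,b+2^k−1}` as a set of points. -/
def dyadicCell (k a b : ℕ) : Set (ℕ × ℕ) :=
  {p | a ≤ p.1 ∧ p.1 < a + 2 ^ k ∧ b ≤ p.2 ∧ p.2 < b + 2 ^ k}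

/-- A recursive space-filling curve map (Definition 2.3, `d = 2`) on the grid
`{0,…,2^ω−1}²`: `π ℓ (a, b)` is the bit string assigned to the depth-`ℓ` quadtree
cube (i.e. the level-`(ω−ℓ)` dyadic cell) with corner `(a, b)`; it must have length
`2ℓ`, distinct cubes of the same depth must receive distinct strings, and the string
of a cube must be a prefix of the string of each of its sub-cubes. -/
def IsRSFCMap (ω : ℕ) (π : ℕ → ℕ × ℕ → List Bool) : Prop :=
  (∀ ℓ, ℓ ≤ ω → ∀ a b, CellCorner ω (ω - ℓ) a b → (π ℓ (a, b)).length = 2 * ℓ) ∧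
  (∀ ℓ, ℓ ≤ ω → ∀ a b a' b',
    CellCorner ω (ω - ℓ) a b → CellCorner ω (ω - ℓ) a' b' →
    (a, b) ≠ (a', b') → π ℓ (a, b) ≠ π ℓ (a', b')) ∧
  (∀ ℓ ℓ', ℓ ≤ ℓ' → ℓ' ≤ ω → ∀ a b a' b',
    CellCorner ω (ω - ℓ) a b → CellCorner ω (ω - ℓ') a' b' →
    dyadicCell (ω - ℓ') a' b' ⊆ dyadicCell (ω - ℓ) a b →
    π ℓ (a, b) <+: π ℓ' (a', b'))

/-- For a grid point `p`, `π(p)` is the string of the unit cell containing `p`,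
whose corner is `p` itself, i.e. `π ω p`.  `SortsTo ω π σ` says that sorting the
points of the grid by the lexicographic order of their strings `π(p)` recovers the
ordering `σ`. -/
def SortsTo (ω : ℕ) (π : ℕ → ℕ × ℕ → List Bool) (σ : ℕ → ℕ × ℕ) : Prop :=
  ∀ i j : ℕ, i < j → j < 4 ^ ω → List.Lex (· < ·) (π ω (σ i)) (π ω (σ j))


lemma lex_append_iff (u x y : List Bool) :
    List.Lex (· < ·) (u ++ x) (u ++ y) ↔ List.Lex (· < ·) x y := by
  induction u with
  | nil => simp
  | cons a u ih => simpa [List.cons_lex_cons_iff] using ih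

lemma lex_of_prefix {u v x y : List Bool} (h : List.Lex (· < ·) u v) :
    u.length = v.length → u <+: x → v <+: y → List.Lex (· < ·) x y := by
  induction h generalizing x y with
  | nil => intro hlen _ _; simp at hlen
  | @cons a l1 l2 h ih =>
      intro hlen hu hv
      obtain ⟨t, rfl⟩ := hu
      obtain ⟨s, rfl⟩ := hv
      simp only [List.cons_append]
      exact List.Lex.cons (ih (by simpa using hlen) (l1.prefix_append t) (l2.prefix_append s))
  | @rel a l1 b l2 hab =>
      intro hlen hu hv
      obtain ⟨t, rfl⟩ := hu
      obtain ⟨s, rfl⟩ := hv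
      simp only [List.cons_append]
      exact List.Lex.rel hab

def val2 : List Bool → ℕ
  | [a, b] => 2 * a.toNat + b.toNat
  | _ => 0

lemma length_two_ex {u : List Bool} (h : u.length = 2) : ∃ a b, u = [a, b] := by
  match u with
  | [a, b] => exact ⟨a, b, rfl⟩
  | [] | [_] | _ :: _ :: _ :: _ => simp at h

lemma val2_lt_four : ∀ u : List Bool, val2 u < 4
  | [a, b] => by cases a <;> cases b <;> decide
  | [] => by decide
  | [_] => by rename_i a; cases a <;> decide
  | a :: b :: c :: l => by simp [val2]

lemma lex_iff_val2 {u v : List Bool} (hu : u.length = 2) (hv : v.length = 2) :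
    List.Lex (· < ·) u v ↔ val2 u < val2 v := by
  obtain ⟨a, b, rfl⟩ := length_two_ex hu
  obtain ⟨a', b', rfl⟩ := length_two_ex hv
  cases a <;> cases b <;> cases a' <;> cases b' <;> decide

lemma val2_inj {u v : List Bool} (hu : u.length = 2) (hv : v.length = 2)
    (h : val2 u = val2 v) : u = v := by
  obtain ⟨a, b, rfl⟩ := length_two_ex hu
  obtain ⟨a', b', rfl⟩ := length_two_ex hv
  revert h; cases a <;> cases b <;> cases a' <;> cases b' <;> decide

lemma prefix_eq_append {u x : List Bool} (h : u <+: x) (hlen : u.length = 2) :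
    x = u ++ x.drop 2 := by
  obtain ⟨t, rfl⟩ := h
  rw [List.drop_append_of_le_length (by omega), List.drop_eq_nil_of_le (by omega)]
  simp

lemma cell_bound {k a ω : ℕ} (hd : 2 ^ k ∣ a) (ha : a < 2 ^ ω) (hk : k ≤ ω) :
    a + 2 ^ k ≤ 2 ^ ω := by
  obtain ⟨m, rfl⟩ := hd
  have h2 : (2:ℕ) ^ ω = 2 ^ k * 2 ^ (ω - k) := by rw [← pow_add]; congr 1; omega
  rw [h2] at ha ⊢
  have : m < 2 ^ (ω - k) := by
    by_contra hm
    exact absurd ha (not_lt.2 (Nat.mul_le_mul_left _ (not_lt.1 hm)))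
  calc 2 ^ k * m + 2 ^ k = 2 ^ k * (m + 1) := by ring
  _ ≤ 2 ^ k * 2 ^ (ω - k) := Nat.mul_le_mul_left _ (by omega)
/-- The corner of the quadrant (level-ω cell of the (ω+1)-grid) containing `p`. -/
def qc (ω : ℕ) (p : ℕ × ℕ) : ℕ × ℕ := (2 ^ ω * (p.1 / 2 ^ ω), 2 ^ ω * (p.2 / 2 ^ ω))

/-- The four quadrant corners. -/
def cor (ω : ℕ) (k : Fin 4) : ℕ × ℕ := (2 ^ ω * (k.1 % 2), 2 ^ ω * (k.1 / 2))

lemma mem_grid {ω : ℕ} {p : ℕ × ℕ} : p ∈ grid ω ↔ p.1 < 2 ^ ω ∧ p.2 < 2 ^ ω := by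
  simp [grid, square]

lemma mem_square {c : ℕ × ℕ} {s : ℕ} {p : ℕ × ℕ} :
    p ∈ square c s ↔ c.1 ≤ p.1 ∧ p.1 < c.1 + s ∧ c.2 ≤ p.2 ∧ p.2 < c.2 + s := Iff.rfl

lemma mem_dyadicCell {k a b : ℕ} {p : ℕ × ℕ} :
    p ∈ dyadicCell k a b ↔ a ≤ p.1 ∧ p.1 < a + 2 ^ k ∧ b ≤ p.2 ∧ p.2 < b + 2 ^ k := Iff.rfl

lemma qc_le_self (ω : ℕ) (p : ℕ × ℕ) :
    (qc ω p).1 ≤ p.1 ∧ p.1 < (qc ω p).1 + 2 ^ ω ∧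
    (qc ω p).2 ≤ p.2 ∧ p.2 < (qc ω p).2 + 2 ^ ω := by
  have h1 := Nat.div_add_mod p.1 (2 ^ ω)
  have h2 := Nat.div_add_mod p.2 (2 ^ ω)
  have h3 := Nat.mod_lt p.1 (y := 2 ^ ω) (pow_pos (by norm_num) _)
  have h4 := Nat.mod_lt p.2 (y := 2 ^ ω) (pow_pos (by norm_num) _)
  simp only [qc]
  omega

lemma mem_square_qc (ω : ℕ) (p : ℕ × ℕ) : p ∈ square (qc ω p) (2 ^ ω) :=
  qc_le_self ω p

lemma qc_eq_of_mem {ω : ℕ} {x y : ℕ} {p : ℕ × ℕ} (hp : p ∈ square (2 ^ ω * x, 2 ^ ω * y) (2 ^ ω)) :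
    qc ω p = (2 ^ ω * x, 2 ^ ω * y) := by
  obtain ⟨h1, h2, h3, h4⟩ := hp
  simp only [qc, Prod.mk.injEq]
  constructor
  · rw [Nat.div_eq_of_lt_le (by simpa [Nat.mul_comm] using h1) (by push_cast at h2 ⊢; rw [add_mul, one_mul, Nat.mul_comm]; simpa [Nat.mul_comm] using h2)]
  · rw [Nat.div_eq_of_lt_le (by simpa [Nat.mul_comm] using h3) (by rw [add_mul, one_mul, Nat.mul_comm]; simpa [Nat.mul_comm] using h4)]

lemma cor_injective (ω : ℕ) : Function.Injective (cor ω) := by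
  intro k k' h
  have hpos : 0 < 2 ^ ω := pow_pos (by norm_num) _
  simp only [cor, Prod.mk.injEq] at h
  obtain ⟨h1, h2⟩ := h
  have e1 : k.1 % 2 = k'.1 % 2 := Nat.eq_of_mul_eq_mul_left hpos h1
  have e2 : k.1 / 2 = k'.1 / 2 := Nat.eq_of_mul_eq_mul_left hpos h2
  exact Fin.ext (by omega)

lemma qc_eq_cor {ω : ℕ} {p : ℕ × ℕ} (hp : p ∈ grid (ω + 1)) :
    ∃ k : Fin 4, qc ω p = cor ω k := by
  rw [mem_grid] at hp
  have hps : (2:ℕ) ^ (ω + 1) = 2 ^ ω * 2 := pow_succ 2 ω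
  have hx : p.1 / 2 ^ ω < 2 := Nat.div_lt_of_lt_mul (by omega)
  have hy : p.2 / 2 ^ ω < 2 := Nat.div_lt_of_lt_mul (by omega)
  refine ⟨⟨p.1 / 2 ^ ω + 2 * (p.2 / 2 ^ ω), by omega⟩, ?_⟩
  have key : ∀ d e : ℕ, d < 2 → (d + 2 * e) % 2 = d ∧ (d + 2 * e) / 2 = e := by
    intro d e hd; omega
  have e1 := (key _ (p.2 / 2 ^ ω) hx).1
  have e2 := (key _ (p.2 / 2 ^ ω) hx).2
  simp only [qc, cor, e1, e2]

lemma cellCorner_cor (ω : ℕ) (k : Fin 4) : CellCorner (ω + 1) ω (cor ω k).1 (cor ω k).2 := by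
  have h2 : k.1 % 2 ≤ 1 := by omega
  have h3 : k.1 / 2 ≤ 1 := by omega
  have hp : (2:ℕ) ^ (ω+1) = 2 ^ ω * 2 := by rw [pow_succ]
  refine ⟨?_, ?_, Dvd.intro _ rfl, Dvd.intro _ rfl⟩ <;> simp only [cor] <;> nlinarith [pow_pos (show 0 < 2 by norm_num) ω]

lemma square_cor_subset_grid (ω : ℕ) (k : Fin 4) :
    square (cor ω k) (2 ^ ω) ⊆ grid (ω + 1) := by
  intro p hp
  obtain ⟨h1, h2, h3, h4⟩ := hp
  have hc := cellCorner_cor ω k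
  rw [mem_grid]
  have hb1 := cell_bound hc.2.2.1 hc.1 (Nat.le_succ ω)
  have hb2 := cell_bound hc.2.2.2 hc.2.1 (Nat.le_succ ω)
  have hps : (2:ℕ) ^ (ω + 1) = 2 ^ ω * 2 := pow_succ 2 ω
  omega

lemma qc_eq_cor_of_mem {ω : ℕ} {k : Fin 4} {p : ℕ × ℕ} (hp : p ∈ square (cor ω k) (2 ^ ω)) :
    qc ω p = cor ω k := by
  have h := qc_eq_of_mem (x := k.1 % 2) (y := k.1 / 2) (p := p) (by simpa [cor] using hp)
  simpa [cor] using h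

lemma corner_string_length {ω : ℕ} {π : ℕ → ℕ × ℕ → List Bool} (hπ : IsRSFCMap (ω + 1) π)
    (k : Fin 4) : (π 1 (cor ω k)).length = 2 :=
  hπ.1 1 (by omega) (cor ω k).1 (cor ω k).2 (by simpa using cellCorner_cor ω k)

lemma unit_prefix {ω : ℕ} {π : ℕ → ℕ × ℕ → List Bool} (hπ : IsRSFCMap (ω + 1) π)
    {p : ℕ × ℕ} (hp : p ∈ grid (ω + 1)) : π 1 (qc ω p) <+: π (ω + 1) p := by
  obtain ⟨k, hk⟩ := qc_eq_cor hp
  rw [mem_grid] at hp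
  have h := hπ.2.2 1 (ω + 1) (by omega) le_rfl (qc ω p).1 (qc ω p).2 p.1 p.2
    (by rw [hk]; simpa using cellCorner_cor ω k)
    (by simpa using ⟨hp.1, hp.2, one_dvd _, one_dvd _⟩)
    (by
      intro q hq
      have h1 := qc_le_self ω p
      rw [mem_dyadicCell] at hq ⊢
      simp only [Nat.sub_self, pow_zero] at hq
      have hq1 : q.1 = p.1 := by omega
      have hq2 : q.2 = p.2 := by omega
      simp only [Nat.add_sub_cancel]
      omega)
  simpa using h

lemma cellCorner_shift {ω ℓ a b : ℕ} (k : Fin 4) (hℓ : ℓ ≤ ω) (h : CellCorner ω (ω - ℓ) a b) :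
    CellCorner (ω + 1) (ω - ℓ) (a + (cor ω k).1) (b + (cor ω k).2) := by
  obtain ⟨h1, h2, h3, h4⟩ := h
  have hps : (2:ℕ) ^ (ω + 1) = 2 ^ ω * 2 := pow_succ 2 ω
  have hdvd : (2:ℕ) ^ (ω - ℓ) ∣ 2 ^ ω := pow_dvd_pow 2 (by omega)
  have hk1 : (cor ω k).1 ≤ 2 ^ ω := by simp only [cor]; nlinarith [Nat.mod_lt k.1 (show 0<2 by norm_num)]
  have hk2 : (cor ω k).2 ≤ 2 ^ ω := by
    simp only [cor]
    have : k.1 / 2 ≤ 1 := by omega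
    nlinarith
  exact ⟨by omega, by omega, Dvd.dvd.add h3 (hdvd.trans ⟨k.1 % 2, rfl⟩),
    Dvd.dvd.add h4 (hdvd.trans ⟨k.1 / 2, rfl⟩)⟩

lemma subset_quadrant {ω ℓ a b : ℕ} (k : Fin 4) (hℓ : ℓ ≤ ω) (h : CellCorner ω (ω - ℓ) a b) :
    dyadicCell (ω - ℓ) (a + (cor ω k).1) (b + (cor ω k).2) ⊆
      dyadicCell ω (cor ω k).1 (cor ω k).2 := by
  obtain ⟨h1, h2, h3, h4⟩ := h
  have hb1 := cell_bound h3 h1 (by omega)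
  have hb2 := cell_bound h4 h2 (by omega)
  intro q hq
  rw [mem_dyadicCell] at hq ⊢
  omega

lemma quadrant_prefix {ω ℓ a b : ℕ} {π : ℕ → ℕ × ℕ → List Bool} (hπ : IsRSFCMap (ω + 1) π)
    (k : Fin 4) (hℓ : ℓ ≤ ω) (h : CellCorner ω (ω - ℓ) a b) :
    π 1 (cor ω k) <+: π (ℓ + 1) (a + (cor ω k).1, b + (cor ω k).2) := by
  have h2 := hπ.2.2 1 (ℓ + 1) (by omega) (by omega) (cor ω k).1 (cor ω k).2
    (a + (cor ω k).1) (b + (cor ω k).2)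
    (by simpa using cellCorner_cor ω k)
    (by simpa [Nat.succ_sub_succ] using cellCorner_shift k hℓ h)
    (by simpa [Nat.succ_sub_succ] using subset_quadrant k hℓ h)
  simpa using h2

lemma dyadic_translate {k k' a b a' b' c1 c2 : ℕ}
    (h : dyadicCell k' a' b' ⊆ dyadicCell k a b) :
    dyadicCell k' (a' + c1) (b' + c2) ⊆ dyadicCell k (a + c1) (b + c2) := by
  intro q hq
  rw [mem_dyadicCell] at hq
  have hq' : (q.1 - c1, q.2 - c2) ∈ dyadicCell k' a' b' := by
    rw [mem_dyadicCell]; simp only; omega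
  have := h hq'
  rw [mem_dyadicCell] at this ⊢
  simp only at this
  omega

lemma quadrant_decomp {ω ℓ a b : ℕ} {π : ℕ → ℕ × ℕ → List Bool} (hπ : IsRSFCMap (ω + 1) π)
    (k : Fin 4) (hℓ : ℓ ≤ ω) (h : CellCorner ω (ω - ℓ) a b) :
    π (ℓ + 1) (a + (cor ω k).1, b + (cor ω k).2) =
      π 1 (cor ω k) ++ (π (ℓ + 1) (a + (cor ω k).1, b + (cor ω k).2)).drop 2 :=
  prefix_eq_append (quadrant_prefix hπ k hℓ h) (corner_string_length hπ k)

lemma shifted_map {ω : ℕ} {π : ℕ → ℕ × ℕ → List Bool} (hπ : IsRSFCMap (ω + 1) π) (k : Fin 4) :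
    IsRSFCMap ω (fun ℓ q => (π (ℓ + 1) (q.1 + (cor ω k).1, q.2 + (cor ω k).2)).drop 2) := by
  refine ⟨?_, ?_, ?_⟩
  · intro ℓ hℓ a b hcc
    simp only
    rw [List.length_drop, hπ.1 (ℓ + 1) (by omega) _ _
      (by simpa [Nat.succ_sub_succ] using cellCorner_shift k hℓ hcc)]
    omega
  · intro ℓ hℓ a b a' b' hcc hcc' hne hdrop
    simp only at hdrop
    have heq : π (ℓ + 1) (a + (cor ω k).1, b + (cor ω k).2) =
        π (ℓ + 1) (a' + (cor ω k).1, b' + (cor ω k).2) := by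
      rw [quadrant_decomp hπ k hℓ hcc, quadrant_decomp hπ k hℓ hcc', hdrop]
    exact hπ.2.1 (ℓ + 1) (by omega) _ _ _ _
      (by simpa [Nat.succ_sub_succ] using cellCorner_shift k hℓ hcc)
      (by simpa [Nat.succ_sub_succ] using cellCorner_shift k hℓ hcc')
      (by simp only [ne_eq, Prod.mk.injEq, not_and]; intro h1 h2; apply hne
          simp only [Prod.mk.injEq]; omega) heq
  · intro ℓ ℓ' hℓℓ' hℓ' a b a' b' hcc hcc' hsub
    simp only
    have hfull := hπ.2.2 (ℓ + 1) (ℓ' + 1) (by omega) (by omega)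
      (a + (cor ω k).1) (b + (cor ω k).2) (a' + (cor ω k).1) (b' + (cor ω k).2)
      (by simpa [Nat.succ_sub_succ] using cellCorner_shift k (by omega) hcc)
      (by simpa [Nat.succ_sub_succ] using cellCorner_shift k hℓ' hcc')
      (by simpa [Nat.succ_sub_succ] using dyadic_translate hsub)
    obtain ⟨t, ht⟩ := hfull
    refine ⟨t, ?_⟩
    rw [quadrant_decomp hπ k (by omega) hcc, List.append_assoc] at ht
    rw [quadrant_decomp hπ k hℓ' hcc'] at ht
    exact List.append_cancel_left ht

theorem rsfc_main : ∀ (ω : ℕ) (π : ℕ → ℕ × ℕ → List Bool), IsRSFCMap ω π →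
    ∀ σ : ℕ → ℕ × ℕ, Set.BijOn σ (Set.Iio (4 ^ ω)) (grid ω) → SortsTo ω π σ →
    IsRSFCOrdering ω σ := by
  intro ω
  induction ω with
  | zero => intro π _ σ hbij _; exact hbij
  | succ ω IH =>
    intro π hπ σ hbij hsorted
    have hpos4 : 0 < (4:ℕ) ^ ω := pow_pos (by norm_num) _
    have hN : (4:ℕ) ^ (ω + 1) = 4 * 4 ^ ω := by rw [pow_succ]; ring
    have hlen2 : ∀ k : Fin 4, (π 1 (cor ω k)).length = 2 := corner_string_length hπ
    have hdistinct : ∀ k k' : Fin 4, k ≠ k' → π 1 (cor ω k) ≠ π 1 (cor ω k') := by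
      intro k k' hkk'
      exact hπ.2.1 1 (by omega) (cor ω k).1 (cor ω k).2 (cor ω k').1 (cor ω k').2 (by simpa using cellCorner_cor ω k)
        (by simpa using cellCorner_cor ω k')
        (fun h => hkk' (cor_injective ω h))
    set fI : ℕ → ℕ := fun i => val2 (π 1 (qc ω (σ i))) with hfI
    set hvalF : Fin 4 → Fin 4 := fun k => ⟨val2 (π 1 (cor ω k)), val2_lt_four _⟩ with hvalFdef
    have hvinj : Function.Injective hvalF := by
      intro k k' h
      by_contra hne
      exact hdistinct k k' hne (val2_inj (hlen2 k) (hlen2 k') (congrArg Fin.val h))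
    set e : Fin 4 ≃ Fin 4 := Equiv.ofBijective hvalF (Finite.injective_iff_bijective.1 hvinj)
      with hedef
    have hcval : ∀ j : Fin 4, val2 (π 1 (cor ω (e.symm j))) = j.1 := by
      intro j
      exact congrArg Fin.val (e.apply_symm_apply j)
    have hkey : ∀ i, i < 4 ^ (ω + 1) → ∀ j : Fin 4, fI i = j.1 →
        qc ω (σ i) = cor ω (e.symm j) := by
      intro i hi j hj
      obtain ⟨k, hk⟩ := qc_eq_cor (hbij.mapsTo hi)
      have h1 : hvalF k = j := by
        apply Fin.ext
        show val2 (π 1 (cor ω k)) = j.1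
        rw [← hk, ← hj]
      rw [hk, ← h1]
      show cor ω k = cor ω (e.symm (e k))
      rw [e.symm_apply_apply]
    have hfval : ∀ i, i < 4 ^ (ω + 1) → ∀ j : Fin 4,
        σ i ∈ square (cor ω (e.symm j)) (2 ^ ω) → fI i = j.1 := by
      intro i hi j hp
      show val2 (π 1 (qc ω (σ i))) = j.1
      rw [qc_eq_cor_of_mem hp]
      exact hcval j
    have hmono : ∀ i i', i < i' → i' < 4 ^ (ω + 1) → fI i ≤ fI i' := by
      intro i i' hii hi'
      by_contra hcon
      push_neg at hcon
      have hi : i < 4 ^ (ω + 1) := hii.trans hi'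
      obtain ⟨k, hk⟩ := qc_eq_cor (hbij.mapsTo hi)
      obtain ⟨k', hk'⟩ := qc_eq_cor (hbij.mapsTo hi')
      have l1 : (π 1 (qc ω (σ i))).length = 2 := by rw [hk]; exact hlen2 k
      have l2 : (π 1 (qc ω (σ i'))).length = 2 := by rw [hk']; exact hlen2 k'
      have hlex : List.Lex (· < ·) (π 1 (qc ω (σ i'))) (π 1 (qc ω (σ i))) :=
        (lex_iff_val2 l2 l1).2 hcon
      have h2 := lex_of_prefix hlex (l2.trans l1.symm) (unit_prefix hπ (hbij.mapsTo hi'))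
        (unit_prefix hπ (hbij.mapsTo hi))
      exact absurd (hsorted i i' hii hi') (asymm h2)
    have hcard : ∀ j : Fin 4,
        ((Finset.range (4 ^ (ω + 1))).filter (fun i => fI i = j.1)).card = 4 ^ ω := by
      intro j
      have hsq4 : (4:ℕ) ^ ω = 2 ^ ω * 2 ^ ω := by
        rw [show (4:ℕ) = 2 * 2 from rfl, mul_pow]
      have hmem : ∀ p : ℕ × ℕ,
          p ∈ (Finset.Ico ((cor ω (e.symm j)).1) ((cor ω (e.symm j)).1 + 2 ^ ω) ×ˢ
            Finset.Ico ((cor ω (e.symm j)).2) ((cor ω (e.symm j)).2 + 2 ^ ω)) ↔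
          p ∈ square (cor ω (e.symm j)) (2 ^ ω) := by
        intro p
        rw [Finset.mem_product, Finset.mem_Ico, Finset.mem_Ico, mem_square]
        tauto
      have hbijcard := Finset.card_bij
        (s := (Finset.range (4 ^ (ω + 1))).filter (fun i => fI i = j.1))
        (t := Finset.Ico ((cor ω (e.symm j)).1) ((cor ω (e.symm j)).1 + 2 ^ ω) ×ˢ
            Finset.Ico ((cor ω (e.symm j)).2) ((cor ω (e.symm j)).2 + 2 ^ ω))
        (fun i _ => σ i)
        (by
          intro i hi
          simp only [Finset.mem_filter, Finset.mem_range] at hi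
          exact (hmem (σ i)).2 ((hkey i hi.1 j hi.2) ▸ mem_square_qc ω (σ i)))
        (by
          intro i hi i' hi' h
          simp only [Finset.mem_filter, Finset.mem_range] at hi hi'
          exact hbij.injOn hi.1 hi'.1 h)
        (by
          intro p hp
          have hpsq := (hmem p).1 hp
          obtain ⟨i, hiI, hσ⟩ := hbij.surjOn (square_cor_subset_grid ω _ hpsq)
          refine ⟨i, ?_, hσ⟩
          simp only [Finset.mem_filter, Finset.mem_range]
          refine ⟨hiI, hfval i hiI j ?_⟩
          rw [hσ]; exact hpsq)
      rw [hbijcard, Finset.card_product, Nat.card_Ico, Nat.card_Ico,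
        Nat.add_sub_cancel_left, Nat.add_sub_cancel_left, ← hsq4]
    have hcount : ∀ m, m ≤ 4 →
        ((Finset.range (4 ^ (ω + 1))).filter (fun i => fI i < m)).card = m * 4 ^ ω := by
      intro m
      induction m with
      | zero => intro _; simp
      | succ m ih =>
        intro hm
        have hsplit : (Finset.range (4 ^ (ω + 1))).filter (fun i => fI i < m + 1) =
            (Finset.range (4 ^ (ω + 1))).filter (fun i => fI i < m) ∪
            (Finset.range (4 ^ (ω + 1))).filter (fun i => fI i = m) := by
          ext i
          simp only [Finset.mem_union, Finset.mem_filter, Finset.mem_range]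
          constructor
          · rintro ⟨h1, h2⟩; omega
          · rintro (⟨h1, h2⟩ | ⟨h1, h2⟩) <;> exact ⟨h1, by omega⟩
        rw [hsplit, Finset.card_union_of_disjoint (by
          rw [Finset.disjoint_left]
          intro a ha hb
          simp only [Finset.mem_filter] at ha hb
          omega)]
        rw [ih (by omega), hcard ⟨m, by omega⟩]
        ring
    have hdiv : ∀ i, i < 4 ^ (ω + 1) → fI i = i / 4 ^ ω := by
      intro i hi
      have hf4 : fI i < 4 := val2_lt_four _
      have hlow : fI i * 4 ^ ω ≤ i := by
        have hsub : (Finset.range (4 ^ (ω + 1))).filter (fun i' => fI i' < fI i) ⊆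
            Finset.range i := by
          intro i' hi'
          simp only [Finset.mem_filter, Finset.mem_range] at hi' ⊢
          rcases Nat.lt_or_ge i' i with h | h
          · exact h
          · exfalso
            rcases Nat.eq_or_lt_of_le h with h' | h'
            · rw [← h'] at hi'
              exact lt_irrefl _ hi'.2
            · exact absurd hi'.2 (not_lt.2 (hmono i i' h' hi'.1))
        have := Finset.card_le_card hsub
        rw [hcount (fI i) (by omega)] at this
        simpa using this
      have hhigh : i < (fI i + 1) * 4 ^ ω := by
        have hsub : Finset.range (i + 1) ⊆
            (Finset.range (4 ^ (ω + 1))).filter (fun i' => fI i' < fI i + 1) := by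
          intro i' hi'
          simp only [Finset.mem_range] at hi'
          simp only [Finset.mem_filter, Finset.mem_range]
          refine ⟨by omega, ?_⟩
          rcases Nat.lt_or_ge i' i with h | h
          · exact Nat.lt_succ_of_le (hmono i' i h hi)
          · have : i' = i := by omega
            rw [this]
            omega
        have := Finset.card_le_card hsub
        rw [hcount (fI i + 1) (by omega)] at this
        simpa using this
      exact (Nat.div_eq_of_lt_le hlow hhigh).symm
    -- the four components
    have himg : ∀ j : Fin 4, σ '' Set.Ico (j.1 * 4 ^ ω) ((j.1 + 1) * 4 ^ ω) =
        square (cor ω (e.symm j)) (2 ^ ω) ∩ grid (ω + 1) := by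
      intro j
      have hle : (j.1 + 1) * 4 ^ ω ≤ 4 ^ (ω + 1) := by
        rw [hN]; exact Nat.mul_le_mul_right _ (by omega)
      apply Set.Subset.antisymm
      · rintro p ⟨i, hi, rfl⟩
        obtain ⟨hi1, hi2⟩ := hi
        have hiN : i < 4 ^ (ω + 1) := lt_of_lt_of_le hi2 hle
        have hfi : fI i = j.1 := by
          rw [hdiv i hiN, Nat.div_eq_of_lt_le hi1 hi2]
        have hq := hkey i hiN j hfi
        exact ⟨hq ▸ mem_square_qc ω (σ i), hbij.mapsTo hiN⟩
      · rintro p ⟨hpsq, hpg⟩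
        obtain ⟨i, hiI, hσ⟩ := hbij.surjOn hpg
        have hiN : i < 4 ^ (ω + 1) := hiI
        have hfi : fI i = j.1 := hfval i hiN j (by rw [hσ]; exact hpsq)
        have hidiv : i / 4 ^ ω = j.1 := by rw [← hdiv i hiN, hfi]
        have hdm := Nat.div_add_mod i (4 ^ ω)
        have hml : i % 4 ^ ω < 4 ^ ω := Nat.mod_lt _ hpos4
        rw [hidiv, Nat.mul_comm] at hdm
        refine ⟨i, ⟨by omega, ?_⟩, hσ⟩
        rw [add_mul, one_mul]
        omega
    have hdisj : ∀ j j' : Fin 4, j ≠ j' →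
        Disjoint (square (cor ω (e.symm j)) (2 ^ ω)) (square (cor ω (e.symm j')) (2 ^ ω)) := by
      intro j j' hjj'
      rw [Set.disjoint_left]
      intro p hp hp'
      have h1 := qc_eq_cor_of_mem hp
      have h2 := qc_eq_cor_of_mem hp'
      have : e.symm j = e.symm j' := cor_injective ω (h1.symm.trans h2)
      exact hjj' (by rw [← e.apply_symm_apply j, this, e.apply_symm_apply])
    have huni : (⋃ j : Fin 4, square (cor ω (e.symm j)) (2 ^ ω)) = grid (ω + 1) := by
      apply Set.Subset.antisymm
      · exact Set.iUnion_subset fun j => square_cor_subset_grid ω _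
      · intro p hp
        obtain ⟨k, hk⟩ := qc_eq_cor hp
        refine Set.mem_iUnion.2 ⟨e k, ?_⟩
        rw [e.symm_apply_apply, ← hk]
        exact mem_square_qc ω p
    refine ⟨hbij, fun j => cor ω (e.symm j), 2 ^ ω, hdisj, huni, himg, ?_⟩
    intro j
    set jn := j.1 * 4 ^ ω with hjndef
    have hjnle : jn + 4 ^ ω ≤ 4 ^ (ω + 1) := by
      rw [hN, hjndef]
      have : (j.1 + 1) * 4 ^ ω ≤ 4 * 4 ^ ω := Nat.mul_le_mul_right _ (by omega)
      rw [add_mul, one_mul] at this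
      omega
    have hblock : ∀ i, i < 4 ^ ω → σ (jn + i) ∈ square (cor ω (e.symm j)) (2 ^ ω) := by
      intro i hi
      have hmemI : jn + i ∈ Set.Ico (j.1 * 4 ^ ω) ((j.1 + 1) * 4 ^ ω) := by
        rw [Set.mem_Ico, add_mul, one_mul]
        omega
      exact ((himg j) ▸ Set.mem_image_of_mem σ hmemI).1
    have hblockN : ∀ i, i < 4 ^ ω → jn + i < 4 ^ (ω + 1) := fun i hi => by omega
    apply IH (fun ℓ q => (π (ℓ + 1) (q.1 + (cor ω (e.symm j)).1, q.2 + (cor ω (e.symm j)).2)).drop 2)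
      (shifted_map hπ (e.symm j))
    · -- BijOn
      refine ⟨?_, ?_, ?_⟩
      · intro i hi
        have hb := hblock i hi
        rw [mem_square] at hb
        show _ ∈ grid ω
        rw [mem_grid]
        constructor <;> [skip; skip] <;> simp only <;> omega
      · intro i hi i' hi' hh
        simp only [Prod.mk.injEq] at hh
        have hb := hblock i hi
        have hb' := hblock i' hi'
        rw [mem_square] at hb hb'
        have h1 : σ (jn + i) = σ (jn + i') := by
          apply Prod.ext <;> omega
        have := hbij.injOn (Set.mem_Iio.2 (hblockN i hi)) (Set.mem_Iio.2 (hblockN i' hi')) h1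
        omega
      · intro q hq
        rw [mem_grid] at hq
        have hsq : (q.1 + (cor ω (e.symm j)).1, q.2 + (cor ω (e.symm j)).2) ∈ square (cor ω (e.symm j)) (2 ^ ω) := by
          rw [mem_square]; simp only; omega
        have : (q.1 + (cor ω (e.symm j)).1, q.2 + (cor ω (e.symm j)).2) ∈
            square (cor ω (e.symm j)) (2 ^ ω) ∩ grid (ω + 1) :=
          ⟨hsq, square_cor_subset_grid ω (e.symm j) hsq⟩
        rw [← himg j] at this
        obtain ⟨i, hiIco, hσ⟩ := this
        rw [Set.mem_Ico, add_mul, one_mul] at hiIco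
        refine ⟨i - jn, Set.mem_Iio.2 (by omega), ?_⟩
        have hii : jn + (i - jn) = i := by omega
        simp only [hii, hσ]
        apply Prod.ext <;> simp
    · -- SortsTo
      intro i i' hii' hi'
      have hi : i < 4 ^ ω := hii'.trans hi'
      have hb := hblock i hi
      have hb' := hblock i' hi'
      rw [mem_square] at hb hb'
      have h1 : ((σ (jn + i)).1 - (cor ω (e.symm j)).1 + (cor ω (e.symm j)).1,
          (σ (jn + i)).2 - (cor ω (e.symm j)).2 + (cor ω (e.symm j)).2) = σ (jn + i) := by
        apply Prod.ext <;> simp only <;> omega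
      have h1' : ((σ (jn + i')).1 - (cor ω (e.symm j)).1 + (cor ω (e.symm j)).1,
          (σ (jn + i')).2 - (cor ω (e.symm j)).2 + (cor ω (e.symm j)).2) = σ (jn + i') := by
        apply Prod.ext <;> simp only <;> omega
      simp only [h1, h1']
      have hcc : CellCorner ω (ω - ω) ((σ (jn + i)).1 - (cor ω (e.symm j)).1)
          ((σ (jn + i)).2 - (cor ω (e.symm j)).2) := by
        refine ⟨by omega, by omega, by simp, by simp⟩
      have hcc' : CellCorner ω (ω - ω) ((σ (jn + i')).1 - (cor ω (e.symm j)).1)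
          ((σ (jn + i')).2 - (cor ω (e.symm j)).2) := by
        refine ⟨by omega, by omega, by simp, by simp⟩
      have hd := quadrant_decomp hπ (e.symm j) le_rfl hcc
      have hd' := quadrant_decomp hπ (e.symm j) le_rfl hcc'
      rw [h1] at hd
      rw [h1'] at hd'
      have hlex := hsorted (jn + i) (jn + i') (by omega) (by omega)
      rw [hd, hd'] at hlex
      exact (lex_append_iff _ _ _).1 hlex

/-- For every recursive space-filling curve map `π` on the grid `D = {0,…,2^ω−1}²`
(Definition 2.3), the bijection `σ : {0,…,4^ω−1} → D` obtained by listing the points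
of `D` in increasing lexicographic order of their strings `π(p)` is a recursive
space-filling curve ordering in the sense of Definition 2.1. -/
theorem rsfc_map_to_ordering (ω : ℕ) (π : ℕ → ℕ × ℕ → List Bool)
    (hπ : IsRSFCMap ω π) (σ : ℕ → ℕ × ℕ)
    (hbij : Set.BijOn σ (Set.Iio (4 ^ ω)) (grid ω))
    (hsorted : SortsTo ω π σ) :
    IsRSFCOrdering ω σ := by
  exact rsfc_main ω π hπ σ hbij hsorted
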